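/- Let p ≥ 3 be a prime, V₁ = { ∑_{k=0}^∞ a_k p^k : a ∈ {0,1}^ℕ } and W₁ = { ∑_{k=0}^∞ a_k p^k : a ∈ {0,2}^ℕ }, regarded as subsets of ℚ_p, let V₂, W₂ ⊆ ℚ_p be disjoint nonempty compact open sets, and pick v ∈ V₂ and w ∈ W₂. Set U = (V₁ × V₂) ∪ (W₁ × W₂) ⊆ ℚ_p × ℚ_p. Then the compact set {0} × {v,w} ⊆ U has no open cartesian neighbourhood in U: there do not exist subsets P₁, P₂ ⊆ ℚ_p such that P₁ × P₂ ⊆ U, P₁ × P₂ is relatively open in U, and {(0,v), (0,w)} ⊆ P₁ × P₂. -/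

import Mathlib

open scoped BigOperators

section Aux

variable {p : ℕ} [Fact p.Prime]

private lemma digit_summable (c : ℕ → ℚ_[p]) (hc : ∀ k, ‖c k‖ ≤ 1) :
    Summable (fun k : ℕ => c k * (p : ℚ_[p]) ^ k) := by
  refine Summable.of_norm_bounded (g := fun k => ‖(p : ℚ_[p])‖ ^ k)
    (summable_geometric_of_lt_one (norm_nonneg _) Padic.norm_p_lt_one) (fun k => ?_)
  rw [norm_mul, norm_pow]
  calc ‖c k‖ * ‖(p : ℚ_[p])‖ ^ k ≤ 1 * ‖(p : ℚ_[p])‖ ^ k := by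
        exact mul_le_mul_of_nonneg_right (hc k) (by positivity)
    _ = ‖(p : ℚ_[p])‖ ^ k := one_mul _

private lemma digits_unique (a b : ℕ → ℕ) (ha : ∀ k, a k < p) (hb : ∀ k, b k < p)
    (h : ∑' k : ℕ, (a k : ℚ_[p]) * (p : ℚ_[p]) ^ k
       = ∑' k : ℕ, (b k : ℚ_[p]) * (p : ℚ_[p]) ^ k) : a = b := by
  by_contra hab
  have hS : ∃ n, a n ≠ b n := by
    by_contra h'
    push_neg at h'
    exact hab (funext h')
  classical
  set n := Nat.find hS with hn
  have hne : a n ≠ b n := Nat.find_spec hS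
  have hmin : ∀ k < n, a k = b k := fun k hk => by
    by_contra h'
    have h2 : n ≤ k := Nat.find_le h'
    omega
  set c : ℕ → ℚ_[p] := fun k => (a k : ℚ_[p]) - (b k : ℚ_[p]) with hc
  have hcnorm : ∀ k, ‖c k‖ ≤ 1 := fun k => by
    have : c k = (((a k : ℤ) - (b k : ℤ) : ℤ) : ℚ_[p]) := by push_cast [hc]; ring
    rw [this]; exact Padic.norm_int_le_one _
  have hsa : Summable (fun k : ℕ => (a k : ℚ_[p]) * (p : ℚ_[p]) ^ k) :=
    digit_summable _ (fun k => by
      simpa using Padic.norm_int_le_one (p := p) (a k))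
  have hsb : Summable (fun k : ℕ => (b k : ℚ_[p]) * (p : ℚ_[p]) ^ k) :=
    digit_summable _ (fun k => by
      simpa using Padic.norm_int_le_one (p := p) (b k))
  have hsc : Summable (fun k : ℕ => c k * (p : ℚ_[p]) ^ k) := digit_summable _ hcnorm
  have hzero : ∑' k : ℕ, c k * (p : ℚ_[p]) ^ k = 0 := by
    have := Summable.tsum_sub hsa hsb
    rw [← h, sub_self] at this
    rw [← this]
    congr 1; funext k; simp [hc]; ring
  -- split off the first n terms (which vanish)
  have hsplit := Summable.sum_add_tsum_nat_add n hsc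
  have hfirst : (∑ i ∈ Finset.range n, c i * (p : ℚ_[p]) ^ i) = 0 := by
    refine Finset.sum_eq_zero (fun i hi => ?_)
    have : a i = b i := hmin i (Finset.mem_range.mp hi)
    simp [hc, this]
  rw [hfirst, zero_add, hzero] at hsplit
  -- evaluate the tail
  have hsc' : Summable (fun i : ℕ => c (i + n) * (p : ℚ_[p]) ^ i) :=
    digit_summable _ (fun k => hcnorm _)
  have hpow : (fun i : ℕ => c (i + n) * (p : ℚ_[p]) ^ (i + n))
      = fun i : ℕ => (c (i + n) * (p : ℚ_[p]) ^ i) * (p : ℚ_[p]) ^ n := by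
    funext i; rw [pow_add]; ring
  rw [hpow, tsum_mul_right] at hsplit
  have hpn : ((p : ℚ_[p]) ^ n) ≠ 0 := by
    apply pow_ne_zero
    exact_mod_cast (Nat.cast_ne_zero (R := ℚ_[p])).mpr (Fact.out (p := p.Prime)).ne_zero
  have hT : ∑' i : ℕ, c (i + n) * (p : ℚ_[p]) ^ i = 0 :=
    by rcases mul_eq_zero.mp hsplit with h' | h'
       · exact h'
       · exact absurd h' hpn
  -- split off the first term of the tail
  have hsplit2 := Summable.sum_add_tsum_nat_add 1 hsc'
  rw [hT] at hsplit2
  have hone : (∑ i ∈ Finset.range 1, c (i + n) * (p : ℚ_[p]) ^ i) = c n := by simp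
  rw [hone] at hsplit2
  have hcn : c n = -∑' i : ℕ, c (i + 1 + n) * (p : ℚ_[p]) ^ (i + 1) :=
    eq_neg_of_add_eq_zero_left hsplit2
  have hcn_lt : ‖c n‖ < 1 := by
    rw [hcn, norm_neg]
    have hbound : ∀ i : ℕ, ‖c (i + 1 + n) * (p : ℚ_[p]) ^ (i + 1)‖ ≤ ‖(p : ℚ_[p])‖ := by
      intro i
      rw [norm_mul, norm_pow]
      calc ‖c (i + 1 + n)‖ * ‖(p : ℚ_[p])‖ ^ (i + 1)
          ≤ 1 * ‖(p : ℚ_[p])‖ ^ (i + 1) :=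
            mul_le_mul_of_nonneg_right (hcnorm _) (by positivity)
        _ = ‖(p : ℚ_[p])‖ ^ (i + 1) := one_mul _
        _ ≤ ‖(p : ℚ_[p])‖ ^ 1 :=
            pow_le_pow_of_le_one (norm_nonneg _) Padic.norm_p_lt_one.le (by omega)
        _ = ‖(p : ℚ_[p])‖ := pow_one _
    calc ‖∑' i : ℕ, c (i + 1 + n) * (p : ℚ_[p]) ^ (i + 1)‖
        ≤ ‖(p : ℚ_[p])‖ :=
          IsUltrametricDist.norm_tsum_le_of_forall_le_of_nonneg (norm_nonneg _) hbound
      _ < 1 := Padic.norm_p_lt_one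
  -- contradiction: c n is a nonzero integer of absolute value < p
  have hz : c n = (((a n : ℤ) - (b n : ℤ) : ℤ) : ℚ_[p]) := by push_cast [hc]; ring
  rw [hz] at hcn_lt
  have hdvd : (p : ℤ) ∣ ((a n : ℤ) - (b n : ℤ)) :=
    Padic.norm_intCast_lt_one_iff.mp hcn_lt
  have hzne : ((a n : ℤ) - (b n : ℤ)) ≠ 0 := by
    intro h'
    exact hne (by exact_mod_cast sub_eq_zero.mp h')
  have hle := Int.le_of_dvd (abs_pos.mpr hzne) ((dvd_abs _ _).mpr hdvd)
  have habs : |(a n : ℤ) - (b n : ℤ)| < (p : ℤ) := by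
    rw [abs_sub_lt_iff]
    have han := ha n; have hbn := hb n
    omega
  linarith

end Aux

/-- **A compact product set without open cartesian neighbourhood** (Example after 3.16).
For a prime `p ≥ 3`, let `V₁, W₁ ⊆ ℚ_p` be the sets of sums `∑ a_k p^k` with digits in
`{0,1}` resp. `{0,2}`, let `V₂, W₂ ⊆ ℚ_p` be disjoint nonempty compact open sets, pick
`v ∈ V₂`, `w ∈ W₂`, and set `U = (V₁ × V₂) ∪ (W₁ × W₂)`.  Then the compact set
`{0} × {v,w}` has no relatively open product neighbourhood `P₁ × P₂ ⊆ U` in `U`. -/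
theorem no_open_cartesian_neighbourhood (p : ℕ) [Fact p.Prime] (hp : 3 ≤ p)
    (V₁ W₁ : Set ℚ_[p])
    (hV₁ : V₁ = {x | ∃ a : ℕ → ℕ, (∀ k, a k = 0 ∨ a k = 1) ∧
      x = ∑' k : ℕ, (a k : ℚ_[p]) * (p : ℚ_[p]) ^ k})
    (hW₁ : W₁ = {x | ∃ a : ℕ → ℕ, (∀ k, a k = 0 ∨ a k = 2) ∧
      x = ∑' k : ℕ, (a k : ℚ_[p]) * (p : ℚ_[p]) ^ k})
    (V₂ W₂ : Set ℚ_[p])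
    (hV₂c : IsCompact V₂) (hV₂o : IsOpen V₂) (hV₂ne : V₂.Nonempty)
    (hW₂c : IsCompact W₂) (hW₂o : IsOpen W₂) (hW₂ne : W₂.Nonempty)
    (hdisj : Disjoint V₂ W₂) (v w : ℚ_[p]) (hv : v ∈ V₂) (hw : w ∈ W₂)
    (U : Set (ℚ_[p] × ℚ_[p])) (hU : U = (V₁ ×ˢ V₂) ∪ (W₁ ×ˢ W₂)) :
    ¬ ∃ P₁ P₂ : Set ℚ_[p], P₁ ×ˢ P₂ ⊆ U ∧
        (∃ O : Set (ℚ_[p] × ℚ_[p]), IsOpen O ∧ P₁ ×ˢ P₂ = U ∩ O) ∧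
        ((0 : ℚ_[p]), v) ∈ P₁ ×ˢ P₂ ∧ ((0 : ℚ_[p]), w) ∈ P₁ ×ˢ P₂ := by
  rintro ⟨P₁, P₂, hsub, ⟨O, hO, hPO⟩, hv', hw'⟩
  obtain ⟨h0P₁, hvP₂⟩ := hv'
  obtain ⟨-, hwP₂⟩ := hw'
  have hvW₂ : v ∉ W₂ := fun h => hdisj.ne_of_mem hv h rfl
  have hwV₂ : w ∉ V₂ := fun h => hdisj.ne_of_mem h hw rfl
  -- P₁ ⊆ V₁ ∩ W₁ = {0}
  have hP₁ : ∀ x ∈ P₁, x = 0 := by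
    intro x hx
    have hxv : (x, v) ∈ U := hsub ⟨hx, hvP₂⟩
    have hxw : (x, w) ∈ U := hsub ⟨hx, hwP₂⟩
    rw [hU] at hxv hxw
    have hxV₁ : x ∈ V₁ := by
      rcases hxv with h | h
      · exact h.1
      · exact absurd h.2 hvW₂
    have hxW₁ : x ∈ W₁ := by
      rcases hxw with h | h
      · exact absurd h.2 hwV₂
      · exact h.1
    rw [hV₁] at hxV₁; rw [hW₁] at hxW₁
    obtain ⟨a, ha, hxa⟩ := hxV₁
    obtain ⟨b, hb, hxb⟩ := hxW₁
    have hab : a = b := by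
      have heq : ∑' k : ℕ, (a k : ℚ_[p]) * (p : ℚ_[p]) ^ k
          = ∑' k : ℕ, (b k : ℚ_[p]) * (p : ℚ_[p]) ^ k := by rw [← hxa, ← hxb]
      exact digits_unique a b (fun k => by rcases ha k with h | h <;> omega)
        (fun k => by rcases hb k with h | h <;> omega) heq
    have ha0 : ∀ k, a k = 0 := fun k => by
      have := ha k; have := hb k; rw [hab] at *; omega
    rw [hxa]
    simp [ha0]
  -- (0, v) ∈ O
  have h0vO : ((0 : ℚ_[p]), v) ∈ O := by
    have : ((0 : ℚ_[p]), v) ∈ P₁ ×ˢ P₂ := ⟨h0P₁, hvP₂⟩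
    rw [hPO] at this
    exact this.2
  -- p^n ∈ V₁
  have hpnV₁ : ∀ n : ℕ, (p : ℚ_[p]) ^ n ∈ V₁ := by
    intro n
    rw [hV₁]
    classical
    refine ⟨fun k => if k = n then 1 else 0, fun k => by by_cases h : k = n <;> simp [h], ?_⟩
    rw [tsum_eq_single n (fun k hk => by simp [hk])]
    simp
  -- p^n → 0, so eventually (p^n, v) ∈ O ∩ U = P₁ × P₂, forcing p^n = 0
  have hlim : Filter.Tendsto (fun n : ℕ => (((p : ℚ_[p]) ^ n, v) : ℚ_[p] × ℚ_[p]))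
      Filter.atTop (nhds ((0 : ℚ_[p]), v)) := by
    refine Filter.Tendsto.prodMk_nhds ?_ tendsto_const_nhds
    exact tendsto_pow_atTop_nhds_zero_of_norm_lt_one Padic.norm_p_lt_one
  have hev := hlim.eventually (hO.mem_nhds h0vO)
  obtain ⟨n, hn⟩ := hev.exists
  have hmem : ((p : ℚ_[p]) ^ n, v) ∈ P₁ ×ˢ P₂ := by
    rw [hPO]
    exact ⟨hU ▸ Or.inl ⟨hpnV₁ n, hv⟩, hn⟩
  have := hP₁ _ hmem.1
  have hpne : ((p : ℚ_[p]) ^ n) ≠ 0 :=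
    pow_ne_zero _ ((Nat.cast_ne_zero (R := ℚ_[p])).mpr (Fact.out (p := p.Prime)).ne_zero)
  exact hpne this
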